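/- arXiv:2302.07533 — 2 statements merged into one kernel-verified Lean document; each statement's English description precedes it below -/
import Mathlib

section
/- Let X_1, …, X_N be i.i.d. real-valued random variables with mean μ and variance σ². For b = 1, …, B, let the b-th traditional bootstrap resample be X_i^{(b)} = X_{I_{i,b}} for i = 1, …, N, where the indices I_{i,b} are i.i.d. uniform on {1, …, N} and independent of the data. Let X̄^{(b)} = N⁻¹∑_{i=1}^N X_i^{(b)} and ŜE²_TB = B⁻¹∑_{b=1}^B (X̄^{(b)} − X̄)². Then E(ŜE²_TB) = (σ²/N)(1 − 1/N) exactly, for every N ≥ 1 and B ≥ 1. -/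
open MeasureTheory ProbabilityTheory Filter Asymptotics

section Aux
variable {Ω : Type*} {mΩ : MeasurableSpace Ω} {μ : Measure Ω}

lemma aux_indepFun_of_indep {m1 m2 : MeasurableSpace Ω}
    (h : Indep m1 m2 μ) {f g : Ω → ℝ}
    (hf : Measurable[m1] f) (hg : Measurable[m2] g) :
    IndepFun f g μ := by
  rw [indepFun_iff_measure_inter_preimage_eq_mul]
  intro s t hs ht
  rw [Indep_iff] at h
  exact h _ _ (hf hs) (hg ht)

lemma aux_integrable_mul {f g : Ω → ℝ} (hf : MemLp f 2 μ) (hg : MemLp g 2 μ) :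
    Integrable (fun ω => f ω * g ω) μ := by
  have h : MemLp (f • g) 1 μ := hg.smul hf
  rw [memLp_one_iff_integrable] at h
  exact h
end Aux

/-- Exact expectation of the traditional bootstrap estimator of the squared
standard error: `E(ŜE²_TB) = (σ²/N)(1 − 1/N)` for every `N ≥ 1` and `B ≥ 1`. The bootstrap
resample indices `I (b, i)` are i.i.d. uniform on `{0, …, N−1}` and independent of the data. -/
theorem stmt_2
    {Ω : Type*} [MeasureSpace Ω] [IsProbabilityMeasure (ℙ : Measure Ω)]
    (N B : ℕ) (hN : 1 ≤ N) (hB : 1 ≤ B)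
    (X : ℕ → Ω → ℝ) (mu sigma : ℝ)
    (hXmeas : ∀ i, Measurable (X i))
    (hXindep : iIndepFun X ℙ)
    (hXident : ∀ i, IdentDistrib (X i) (X 0) ℙ ℙ)
    (hXmom : MemLp (X 0) 2 ℙ)
    (hmean : 𝔼[X 0] = mu)
    (hvar : 𝔼[fun ω => (X 0 ω - mu) ^ 2] = sigma ^ 2)
    (I : ℕ × ℕ → Ω → ℕ)
    (hImeas : ∀ p, Measurable (I p))
    (hIindep : iIndepFun I ℙ)
    (hIunif : ∀ p : ℕ × ℕ, ∀ j < N, ℙ {ω | I p ω = j} = (N : ENNReal)⁻¹)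
    (hIX : Indep (⨆ i, MeasurableSpace.comap (X i) inferInstance)
        (⨆ p, MeasurableSpace.comap (I p) inferInstance) ℙ) :
    𝔼[fun ω =>
        (∑ b ∈ Finset.range B,
          ((∑ i ∈ Finset.range N, X (I (b, i) ω) ω) / (N : ℝ)
            - (∑ j ∈ Finset.range N, X j ω) / (N : ℝ)) ^ 2) / (B : ℝ)]
      = sigma ^ 2 / (N : ℝ) * (1 - 1 / (N : ℝ)) := by
  classical
  have hN0 : (N:ℝ) ≠ 0 := by positivity
  have hB0 : (B:ℝ) ≠ 0 := by positivity
  have hNE0 : (N:ENNReal) ≠ 0 := Nat.cast_ne_zero.2 (by omega)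
  -- σ-algebras
  set Xbar : Ω → ℝ := fun ω => (∑ j ∈ Finset.range N, X j ω) / N with hXbardef
  set D : ℕ → Ω → ℝ := fun j ω => X j ω - Xbar ω with hDdef
  set χ : ℕ × ℕ → ℕ → Ω → ℝ := fun p j ω => if I p ω = j then 1 else 0 with hχdef
  -- measurability wrt sub-σ-algebras
  have hXm : ∀ j, Measurable[⨆ i, MeasurableSpace.comap (X i) inferInstance] (X j) := fun j => measurable_iff_comap_le.2 (le_iSup (fun i => MeasurableSpace.comap (X i) inferInstance) j)
  have hIm : ∀ p, Measurable[⨆ p, MeasurableSpace.comap (I p) inferInstance] (I p) := fun p => measurable_iff_comap_le.2 (le_iSup (fun q => MeasurableSpace.comap (I q) inferInstance) p)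
  have hXbarm : Measurable[⨆ i, MeasurableSpace.comap (X i) inferInstance] Xbar :=
    (Finset.measurable_sum _ (fun j _ => hXm j)).div_const _
  have hDm : ∀ j, Measurable[⨆ i, MeasurableSpace.comap (X i) inferInstance] (D j) := fun j => (hXm j).sub hXbarm
  have hχm : ∀ p j, Measurable[⨆ p, MeasurableSpace.comap (I p) inferInstance] (χ p j) := fun p j =>
    (Measurable.of_discrete (f := fun n => if n = j then (1:ℝ) else 0)).comp (hIm p)
  have hχm0 : ∀ p j, Measurable (χ p j) := fun p j =>
    (Measurable.of_discrete (f := fun n => if n = j then (1:ℝ) else 0)).comp (hImeas p)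
  -- L² facts
  have hL2 : ∀ j, MemLp (X j) 2 ℙ := fun j => (hXident j).symm.memLp_snd hXmom
  have hInt1 : ∀ j, Integrable (X j) ℙ := fun j => (hL2 j).integrable one_le_two
  have hXbarL2 : MemLp Xbar 2 ℙ := by
    have h1 : MemLp (fun ω => ∑ j ∈ Finset.range N, X j ω) 2 ℙ :=
      memLp_finset_sum _ (fun j _ => hL2 j)
    have h2 := h1.const_mul ((N:ℝ)⁻¹)
    have h3 : Xbar = fun ω => (N:ℝ)⁻¹ * ∑ j ∈ Finset.range N, X j ω := by
      funext ω; simp only [hXbardef]; ring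
    rw [h3]; exact h2
  have hD2 : ∀ j, MemLp (D j) 2 ℙ := fun j => (hL2 j).sub hXbarL2
  have hDDint : ∀ j j', Integrable (fun ω => D j ω * D j' ω) ℙ :=
    fun j j' => aux_integrable_mul (hD2 j) (hD2 j')
  have hχbd : ∀ p j (ω : Ω), ‖χ p j ω‖ ≤ 1 := by
    intro p j ω
    by_cases h : I p ω = j <;> simp [hχdef, h]
  have hχtop : ∀ p j, MemLp (χ p j) ⊤ ℙ := fun p j =>
    memLp_top_of_bound (hχm0 p j).aestronglyMeasurable 1
      (Filter.Eventually.of_forall (hχbd p j))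
  have hχint : ∀ p j, Integrable (χ p j) ℙ := fun p j => (hχtop p j).integrable le_top
  have hχD2 : ∀ p j, MemLp (fun ω => χ p j ω * D j ω) 2 ℙ := fun p j =>
    (hD2 j).smul (hχtop p j)
  -- measure facts
  have hmeasset : ∀ p (j:ℕ), MeasurableSet (I p ⁻¹' {j}) :=
    fun p j => (hImeas p) (measurableSet_singleton j)
  have hχint_eq : ∀ p j, j < N → ∫ ω, χ p j ω ∂ℙ = (N:ℝ)⁻¹ := by
    intro p j hj
    have h1 : χ p j = Set.indicator (I p ⁻¹' {j}) (fun _ => (1:ℝ)) := by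
      funext ω
      by_cases h : I p ω = j <;>
        simp [hχdef, Set.indicator_apply, Set.mem_preimage, h]
    rw [h1, integral_indicator_const (1:ℝ) (hmeasset p j)]
    have : ℙ (I p ⁻¹' {j}) = (N : ENNReal)⁻¹ := hIunif p j hj
    rw [measureReal_def, this]
    simp [ENNReal.toReal_inv]
  -- a.e. all indices in range
  have hae : ∀ᵐ ω ∂ℙ, ∀ p : ℕ × ℕ, I p ω < N := by
    rw [ae_all_iff]
    intro p
    have hset : {ω | I p ω < N} = ⋃ j ∈ Finset.range N, I p ⁻¹' {j} := by
      ext ω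
      simp only [Set.mem_setOf_eq, Set.mem_iUnion, Finset.mem_range, Set.mem_preimage,
        Set.mem_singleton_iff]
      exact ⟨fun h => ⟨I p ω, h, rfl⟩, fun ⟨j, hj, hje⟩ => hje ▸ hj⟩
    have hms : MeasurableSet {ω | I p ω < N} := by
      rw [hset]; exact (Finset.range N).measurableSet_biUnion (fun j _ => hmeasset p j)
    have hP1 : ℙ {ω | I p ω < N} = 1 := by
      rw [hset, measure_biUnion_finset ?_ (fun j _ => hmeasset p j)]
      · have hv : ∀ j ∈ Finset.range N, ℙ (I p ⁻¹' {j}) = (N:ENNReal)⁻¹ :=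
          fun j hj => hIunif p j (Finset.mem_range.1 hj)
        rw [Finset.sum_congr rfl hv]
        rw [Finset.sum_const, Finset.card_range, nsmul_eq_mul]
        exact ENNReal.mul_inv_cancel hNE0 (ENNReal.natCast_ne_top N)
      · intro a _ b _ hab
        refine Set.disjoint_left.2 fun ω ha hb => hab ?_
        simp only [Set.mem_preimage, Set.mem_singleton_iff] at ha hb
        omega
    have : ℙ {ω | I p ω < N}ᶜ = 0 := by
      rw [prob_compl_eq_zero_iff hms]; exact hP1
    filter_upwards [measure_eq_zero_iff_ae_notMem.1 this] with ω hω
    simpa using hω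
  -- rewrite the integrand a.e. using indicators
  have hcongr : (fun ω =>
        (∑ b ∈ Finset.range B,
          ((∑ i ∈ Finset.range N, X (I (b, i) ω) ω) / (N : ℝ)
            - (∑ j ∈ Finset.range N, X j ω) / (N : ℝ)) ^ 2) / (B : ℝ))
      =ᵐ[ℙ] (fun ω => (∑ b ∈ Finset.range B,
          ((∑ i ∈ Finset.range N, ∑ j ∈ Finset.range N,
            χ (b,i) j ω * D j ω) / (N:ℝ))^2) / (B:ℝ)) := by
    filter_upwards [hae] with ω hω
    have hXI : ∀ p : ℕ × ℕ, ∑ j ∈ Finset.range N, χ p j ω * X j ω = X (I p ω) ω := by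
      intro p
      simp only [hχdef, ite_mul, one_mul, zero_mul]
      rw [Finset.sum_ite_eq (Finset.range N) (I p ω) (fun j => X j ω)]
      simp [Finset.mem_range.mpr (hω p)]
    have hsum1 : ∀ p : ℕ × ℕ, ∑ j ∈ Finset.range N, χ p j ω = 1 := by
      intro p
      simp only [hχdef]
      rw [Finset.sum_ite_eq (Finset.range N) (I p ω) (fun _ => (1:ℝ))]
      simp [Finset.mem_range.mpr (hω p)]
    have key : ∀ p : ℕ × ℕ, ∑ j ∈ Finset.range N, χ p j ω * D j ω
        = X (I p ω) ω - Xbar ω := by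
      intro p
      have h4 : ∀ j, χ p j ω * D j ω = χ p j ω * X j ω - χ p j ω * Xbar ω := by
        intro j; simp only [hDdef]; ring
      rw [Finset.sum_congr rfl fun j _ => h4 j, Finset.sum_sub_distrib,
        hXI p, ← Finset.sum_mul, hsum1 p, one_mul]
    congr 1
    refine Finset.sum_congr rfl fun b _ => ?_
    congr 1
    rw [Finset.sum_congr rfl fun i (_ : i ∈ Finset.range N) => key (b, i),
      Finset.sum_sub_distrib, Finset.sum_const, Finset.card_range, sub_div]
    congr 1
    rw [nsmul_eq_mul]
    simp only [hXbardef]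
    field_simp
  rw [integral_congr_ae hcongr]
  -- moments of the centered variables
  have hWsq : ∀ j, ∫ ω, (X j ω - mu)^2 ∂ℙ = sigma^2 := by
    intro j
    have hid : IdentDistrib (fun ω => (X j ω - mu)^2) (fun ω => (X 0 ω - mu)^2) ℙ ℙ := by
      have h5 := (hXident j).comp (u := fun x : ℝ => (x - mu)^2)
        ((measurable_id.sub measurable_const).pow_const 2)
      exact h5
    rw [hid.integral_eq]
    simpa using hvar
  have hWmean : ∀ j, ∫ ω, (X j ω - mu) ∂ℙ = 0 := by
    intro j
    rw [integral_sub (hInt1 j) (integrable_const mu), integral_const]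
    have hj : ∫ ω, X j ω ∂ℙ = mu := by rw [(hXident j).integral_eq]; simpa using hmean
    simp [hj]
  have hWint : ∀ j, Integrable (fun ω => X j ω - mu) ℙ :=
    fun j => (hInt1 j).sub (integrable_const mu)
  have hWL2 : ∀ j, MemLp (fun ω => X j ω - mu) 2 ℙ :=
    fun j => (hL2 j).sub (memLp_const mu)
  have hWcross : ∀ j k, j ≠ k → ∫ ω, (X j ω - mu) * (X k ω - mu) ∂ℙ = 0 := by
    intro j k hjk
    have hind : IndepFun (fun ω => X j ω - mu) (fun ω => X k ω - mu) ℙ := by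
      have h6 := (hXindep.indepFun hjk).comp (φ := fun x : ℝ => x - mu) (ψ := fun x : ℝ => x - mu)
        (measurable_id.sub measurable_const) (measurable_id.sub measurable_const)
      exact h6
    calc ∫ ω, (X j ω - mu) * (X k ω - mu) ∂ℙ
        = (∫ ω, (X j ω - mu) ∂ℙ) * ∫ ω, (X k ω - mu) ∂ℙ :=
          hind.integral_fun_mul_eq_mul_integral (hWint j).aestronglyMeasurable (hWint k).aestronglyMeasurable
      _ = 0 := by rw [hWmean j, hWmean k, mul_zero]
  have hWWint : ∀ j k, Integrable (fun ω => (X j ω - mu) * (X k ω - mu)) ℙ :=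
    fun j k => aux_integrable_mul (hWL2 j) (hWL2 k)
  have hSW : ∫ ω, (∑ j ∈ Finset.range N, (X j ω - mu))^2 ∂ℙ = N * sigma^2 := by
    have hpt : ∀ ω : Ω, (∑ j ∈ Finset.range N, (X j ω - mu))^2
        = ∑ j ∈ Finset.range N, ∑ k ∈ Finset.range N, (X j ω - mu) * (X k ω - mu) := by
      intro ω; rw [sq, Finset.sum_mul_sum]
    simp only [hpt]
    rw [integral_finset_sum _ (fun j _ => integrable_finset_sum _ (fun k _ => hWWint j k))]
    have h7 : ∀ j ∈ Finset.range N,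
        ∫ ω, ∑ k ∈ Finset.range N, (X j ω - mu) * (X k ω - mu) ∂ℙ = sigma^2 := by
      intro j hj
      rw [integral_finset_sum _ (fun k _ => hWWint j k)]
      rw [Finset.sum_eq_single_of_mem j hj
        (fun k _ hkj => hWcross j k (fun h => hkj h.symm))]
      rw [show (fun ω => (X j ω - mu) * (X j ω - mu)) = fun ω => (X j ω - mu)^2 from
        funext fun ω => (sq _).symm]
      exact hWsq j
    rw [Finset.sum_congr rfl h7, Finset.sum_const, Finset.card_range, nsmul_eq_mul]
  -- pointwise: the resample deviations sum to zero
  have hDsum0 : ∀ ω : Ω, ∑ j ∈ Finset.range N, D j ω = 0 := by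
    intro ω
    simp only [hDdef]
    rw [Finset.sum_sub_distrib, Finset.sum_const, Finset.card_range, nsmul_eq_mul]
    simp only [hXbardef]
    field_simp
    ring
  have K2 : ∑ j ∈ Finset.range N, ∑ j' ∈ Finset.range N, ∫ ω, D j ω * D j' ω ∂ℙ = 0 := by
    have h1 : ∀ j ∈ Finset.range N, ∑ j' ∈ Finset.range N, ∫ ω, D j ω * D j' ω ∂ℙ
        = ∫ ω, D j ω * ∑ j' ∈ Finset.range N, D j' ω ∂ℙ := by
      intro j _
      rw [← integral_finset_sum _ (fun j' _ => hDDint j j')]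
      simp only [← Finset.mul_sum]
    rw [Finset.sum_congr rfl h1]
    have h2 : ∀ j ∈ Finset.range N, ∫ ω, D j ω * ∑ j' ∈ Finset.range N, D j' ω ∂ℙ = 0 := by
      intro j _
      simp only [hDsum0, mul_zero, integral_zero]
    rw [Finset.sum_congr rfl h2, Finset.sum_const, smul_zero]
  have hDsq_pt : ∀ ω : Ω, ∑ j ∈ Finset.range N, D j ω * D j ω
      = ∑ j ∈ Finset.range N, (X j ω - mu)^2
        - (∑ j ∈ Finset.range N, (X j ω - mu))^2 / N := by
    intro ω
    have hXbar' : Xbar ω = mu + (∑ j ∈ Finset.range N, (X j ω - mu)) / N := by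
      simp only [hXbardef]
      rw [Finset.sum_sub_distrib, Finset.sum_const, Finset.card_range, nsmul_eq_mul]
      field_simp
      ring
    have hDj : ∀ j, D j ω = (X j ω - mu) - (∑ k ∈ Finset.range N, (X k ω - mu)) / N := by
      intro j; simp only [hDdef]; rw [hXbar']; ring
    rw [Finset.sum_congr rfl fun j _ => by rw [hDj j]]
    have expand : ∀ j ∈ Finset.range N,
        ((X j ω - mu) - (∑ k ∈ Finset.range N, (X k ω - mu))/N)
          * ((X j ω - mu) - (∑ k ∈ Finset.range N, (X k ω - mu))/N)
        = (X j ω - mu)^2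
          - 2*((∑ k ∈ Finset.range N, (X k ω - mu))/N)*(X j ω - mu)
          + ((∑ k ∈ Finset.range N, (X k ω - mu))/N)^2 := fun j _ => by ring
    rw [Finset.sum_congr rfl expand, Finset.sum_add_distrib, Finset.sum_sub_distrib,
      ← Finset.mul_sum, Finset.sum_const, Finset.card_range, nsmul_eq_mul]
    field_simp
    ring
  have K1 : ∑ j ∈ Finset.range N, ∫ ω, D j ω * D j ω ∂ℙ = ((N:ℝ) - 1) * sigma^2 := by
    rw [← integral_finset_sum _ (fun j _ => hDDint j j)]
    simp only [hDsq_pt]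
    rw [integral_sub (integrable_finset_sum _ (fun j _ => (hWL2 j).integrable_sq))
        (((memLp_finset_sum _ (fun j _ => hWL2 j)).integrable_sq).div_const _)]
    rw [integral_finset_sum _ (fun j _ => (hWL2 j).integrable_sq)]
    rw [Finset.sum_congr rfl (fun j _ => hWsq j), Finset.sum_const, Finset.card_range,
      nsmul_eq_mul, integral_div, hSW]
    field_simp
  -- product integral factorization via independence of the two σ-algebras
  have hχχDD : ∀ (p p' : ℕ × ℕ) (j j' : ℕ),
      ∫ ω, (χ p j ω * χ p' j' ω) * (D j ω * D j' ω) ∂ℙ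
        = (∫ ω, χ p j ω * χ p' j' ω ∂ℙ) * ∫ ω, D j ω * D j' ω ∂ℙ := by
    intro p p' j j'
    have hind : IndepFun (fun ω => D j ω * D j' ω) (fun ω => χ p j ω * χ p' j' ω) ℙ :=
      aux_indepFun_of_indep hIX ((hDm j).mul (hDm j')) ((hχm p j).mul (hχm p' j'))
    have hint1 : Integrable (fun ω => χ p j ω * χ p' j' ω) ℙ := by
      refine (hχint p' j').bdd_mul (hχm0 p j).aestronglyMeasurable (Filter.Eventually.of_forall (hχbd p j))
    calc ∫ ω, (χ p j ω * χ p' j' ω) * (D j ω * D j' ω) ∂ℙ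
        = ∫ ω, (D j ω * D j' ω) * (χ p j ω * χ p' j' ω) ∂ℙ := by
          congr 1; funext ω; ring
      _ = (∫ ω, D j ω * D j' ω ∂ℙ) * ∫ ω, χ p j ω * χ p' j' ω ∂ℙ :=
          hind.integral_fun_mul_eq_mul_integral (hDDint j j').aestronglyMeasurable hint1.aestronglyMeasurable
      _ = (∫ ω, χ p j ω * χ p' j' ω ∂ℙ) * ∫ ω, D j ω * D j' ω ∂ℙ := mul_comm _ _
  -- value of the indicator-product integrals
  have hχχint_eq : ∀ (b i i' j j' : ℕ), i < N → i' < N → j < N → j' < N →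
      ∫ ω, χ (b,i) j ω * χ (b,i') j' ω ∂ℙ
        = if i = i' then (if j = j' then (N:ℝ)⁻¹ else 0) else (N:ℝ)⁻¹ * (N:ℝ)⁻¹ := by
    intro b i i' j j' hi hi' hj hj'
    by_cases hii : i = i'
    · subst hii
      rw [if_pos rfl]
      by_cases hjj : j = j'
      · subst hjj
        rw [if_pos rfl]
        have hsq : (fun ω => χ (b,i) j ω * χ (b,i) j ω) = χ (b,i) j := by
          funext ω; simp only [hχdef]
          by_cases h : I (b,i) ω = j <;> simp [h]
        calc ∫ ω, χ (b,i) j ω * χ (b,i) j ω ∂ℙ = ∫ ω, χ (b,i) j ω ∂ℙ := by rw [hsq]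
          _ = (N:ℝ)⁻¹ := hχint_eq (b,i) j hj
      · rw [if_neg hjj]
        have hz : (fun ω => χ (b,i) j ω * χ (b,i) j' ω) = fun _ => (0:ℝ) := by
          funext ω; simp only [hχdef]
          by_cases h : I (b,i) ω = j
          · have h2 : I (b,i) ω ≠ j' := fun hc => hjj (h ▸ hc)
            simp [h, h2, hjj]
          · simp [h]
        calc ∫ ω, χ (b,i) j ω * χ (b,i) j' ω ∂ℙ = ∫ ω, (0:ℝ) ∂ℙ := by rw [hz]
          _ = 0 := integral_zero _ _
    · rw [if_neg hii]
      have hpp : ((b,i) : ℕ × ℕ) ≠ (b,i') := by simp [Prod.ext_iff, hii]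
      have hind : IndepFun (χ (b,i) j) (χ (b,i') j') ℙ := by
        have h10 := (hIindep.indepFun hpp).comp (φ := fun n => if n = j then (1:ℝ) else 0)
          (ψ := fun n => if n = j' then (1:ℝ) else 0) Measurable.of_discrete Measurable.of_discrete
        exact h10
      calc ∫ ω, χ (b,i) j ω * χ (b,i') j' ω ∂ℙ
          = (∫ ω, χ (b,i) j ω ∂ℙ) * ∫ ω, χ (b,i') j' ω ∂ℙ :=
            hind.integral_fun_mul_eq_mul_integral (hχint _ _).aestronglyMeasurable (hχint _ _).aestronglyMeasurable
        _ = (N:ℝ)⁻¹ * (N:ℝ)⁻¹ := by rw [hχint_eq _ j hj, hχint_eq _ j' hj']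
  -- the inner double sums
  have hinner : ∀ (b i i' : ℕ), i < N → i' < N →
      ∑ j ∈ Finset.range N, ∑ j' ∈ Finset.range N,
        ∫ ω, (χ (b,i) j ω * D j ω) * (χ (b,i') j' ω * D j' ω) ∂ℙ
      = if i = i' then (N:ℝ)⁻¹ * (((N:ℝ) - 1) * sigma^2) else 0 := by
    intro b i i' hi hi'
    have hterm : ∀ j j', j < N → j' < N →
        ∫ ω, (χ (b,i) j ω * D j ω) * (χ (b,i') j' ω * D j' ω) ∂ℙ
        = (if i = i' then (if j = j' then (N:ℝ)⁻¹ else 0) else (N:ℝ)⁻¹ * (N:ℝ)⁻¹)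
            * ∫ ω, D j ω * D j' ω ∂ℙ := by
      intro j j' hj hj'
      have hre : (fun ω => (χ (b,i) j ω * D j ω) * (χ (b,i') j' ω * D j' ω))
          = fun ω => (χ (b,i) j ω * χ (b,i') j' ω) * (D j ω * D j' ω) := by
        funext ω; ring
      calc ∫ ω, (χ (b,i) j ω * D j ω) * (χ (b,i') j' ω * D j' ω) ∂ℙ
          = ∫ ω, (χ (b,i) j ω * χ (b,i') j' ω) * (D j ω * D j' ω) ∂ℙ := by rw [hre]
        _ = (∫ ω, χ (b,i) j ω * χ (b,i') j' ω ∂ℙ) * ∫ ω, D j ω * D j' ω ∂ℙ := hχχDD _ _ _ _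
        _ = _ := by rw [hχχint_eq b i i' j j' hi hi' hj hj']
    rw [Finset.sum_congr rfl (fun j hj => Finset.sum_congr rfl (fun j' hj' =>
      hterm j j' (Finset.mem_range.1 hj) (Finset.mem_range.1 hj')))]
    by_cases hii : i = i'
    · simp only [if_pos hii]
      have h8 : ∀ j ∈ Finset.range N,
          ∑ j' ∈ Finset.range N, (if j = j' then (N:ℝ)⁻¹ else 0) * ∫ ω, D j ω * D j' ω ∂ℙ
          = (N:ℝ)⁻¹ * ∫ ω, D j ω * D j ω ∂ℙ := by
        intro j hj
        have h11 : ∀ j' ∈ Finset.range N,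
            (if j = j' then (N:ℝ)⁻¹ else 0) * ∫ ω, D j ω * D j' ω ∂ℙ
            = if j = j' then (N:ℝ)⁻¹ * ∫ ω, D j ω * D j' ω ∂ℙ else 0 := by
          intro j' _
          by_cases h : j = j' <;> simp [h]
        rw [Finset.sum_congr rfl h11,
          Finset.sum_ite_eq (Finset.range N) j (fun j' => (N:ℝ)⁻¹ * ∫ ω, D j ω * D j' ω ∂ℙ),
          if_pos hj]
      rw [Finset.sum_congr rfl h8, ← Finset.mul_sum, K1]
    · simp only [if_neg hii]
      simp only [← Finset.mul_sum]
      rw [K2, mul_zero]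
  -- integrability of each bootstrap-replicate summand
  have hbint : ∀ b : ℕ, Integrable (fun ω =>
      ((∑ i ∈ Finset.range N, ∑ j ∈ Finset.range N, χ (b,i) j ω * D j ω) / (N:ℝ))^2) ℙ := by
    intro b
    have hS2 : MemLp (fun ω => ∑ i ∈ Finset.range N, ∑ j ∈ Finset.range N,
        χ (b,i) j ω * D j ω) 2 ℙ :=
      memLp_finset_sum _ (fun i _ => memLp_finset_sum _ (fun j _ => hχD2 (b,i) j))
    simp only [div_pow]
    exact (hS2.integrable_sq).div_const _
  -- value of each bootstrap-replicate integral
  have hb : ∀ b : ℕ, ∫ ω, ((∑ i ∈ Finset.range N, ∑ j ∈ Finset.range N,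
        χ (b,i) j ω * D j ω) / (N:ℝ))^2 ∂ℙ
      = ((N:ℝ) - 1) * sigma^2 / (N:ℝ)^2 := by
    intro b
    have hTint : ∀ i i' j j' : ℕ, Integrable
        (fun ω => (χ (b,i) j ω * D j ω) * (χ (b,i') j' ω * D j' ω)) ℙ := by
      intro i i' j j'
      have hre : (fun ω => (χ (b,i) j ω * D j ω) * (χ (b,i') j' ω * D j' ω))
          = fun ω => (χ (b,i) j ω * χ (b,i') j' ω) * (D j ω * D j' ω) := by
        funext ω; ring
      rw [hre]
      refine (hDDint j j').bdd_mul (c := 1) ((hχm0 _ j).mul (hχm0 _ j')).aestronglyMeasurable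
        (Filter.Eventually.of_forall fun ω => ?_)
      calc ‖χ (b,i) j ω * χ (b,i') j' ω‖ = ‖χ (b,i) j ω‖ * ‖χ (b,i') j' ω‖ := norm_mul _ _
        _ ≤ 1 * 1 := mul_le_mul (hχbd _ _ _) (hχbd _ _ _) (norm_nonneg _) zero_le_one
        _ = 1 := one_mul 1
    have hexp : ∀ ω : Ω, ((∑ i ∈ Finset.range N, ∑ j ∈ Finset.range N,
          χ (b,i) j ω * D j ω) / (N:ℝ))^2
        = (∑ i ∈ Finset.range N, ∑ i' ∈ Finset.range N, ∑ j ∈ Finset.range N,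
            ∑ j' ∈ Finset.range N,
            (χ (b,i) j ω * D j ω) * (χ (b,i') j' ω * D j' ω)) / (N:ℝ)^2 := by
      intro ω
      rw [div_pow, sq, Finset.sum_mul_sum]
      congr 1
      refine Finset.sum_congr rfl fun i _ => ?_
      refine Finset.sum_congr rfl fun i' _ => ?_
      rw [Finset.sum_mul_sum]
    simp only [hexp]
    rw [integral_div]
    rw [integral_finset_sum _ (fun i _ => integrable_finset_sum _ (fun i' _ =>
      integrable_finset_sum _ (fun j _ => integrable_finset_sum _ (fun j' _ => hTint i i' j j'))))]
    rw [Finset.sum_congr rfl (fun i _ => integral_finset_sum _ (fun i' _ =>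
      integrable_finset_sum _ (fun j _ => integrable_finset_sum _ (fun j' _ => hTint i i' j j'))))]
    rw [Finset.sum_congr rfl (fun i _ => Finset.sum_congr rfl (fun i' _ =>
      integral_finset_sum _ (fun j _ => integrable_finset_sum _ (fun j' _ => hTint i i' j j'))))]
    rw [Finset.sum_congr rfl (fun i _ => Finset.sum_congr rfl (fun i' _ => Finset.sum_congr rfl
      (fun j _ => integral_finset_sum _ (fun j' _ => hTint i i' j j'))))]
    rw [Finset.sum_congr rfl (fun i hi => Finset.sum_congr rfl (fun i' hi' =>
      hinner b i i' (Finset.mem_range.1 hi) (Finset.mem_range.1 hi')))]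
    have h9 : ∀ i ∈ Finset.range N,
        ∑ i' ∈ Finset.range N, (if i = i' then (N:ℝ)⁻¹ * (((N:ℝ)-1) * sigma^2) else 0)
        = (N:ℝ)⁻¹ * (((N:ℝ)-1) * sigma^2) := by
      intro i hi
      rw [Finset.sum_ite_eq (Finset.range N) i (fun _ => (N:ℝ)⁻¹ * (((N:ℝ)-1) * sigma^2)),
        if_pos hi]
    rw [Finset.sum_congr rfl h9, Finset.sum_const, Finset.card_range, nsmul_eq_mul]
    field_simp
  -- assemble everything
  rw [integral_div, integral_finset_sum _ (fun b _ => hbint b),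
    Finset.sum_congr rfl (fun b _ => hb b), Finset.sum_const, Finset.card_range, nsmul_eq_mul]
  field_simp
end

section
/- Let c₁, c₂, c₃, α₁, α₂, n, R be positive real numbers. If B = √(c₁·α₂·n/(c₂·α₁)) and C = α₁·n·R·B + α₂·n·R, then equality holds in the lower bound: (c₁/(RB) + c₂/(nR) + c₃/n²)·C = (√(c₁·α₁·n) + √(c₂·α₂))² + C·c₃/n². Consequently, for fixed n, among all positive B and R with α₁nRB + α₂nR = C, the objective c₁/(RB) + c₂/(nR) + c₃/n² is minimized at B* = √(c₁α₂n/(c₂α₁)). -/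
open MeasureTheory ProbabilityTheory Filter Asymptotics

/-- For positive reals `c₁, c₂, c₃, α₁, α₂, n, R`, taking
`B = √(c₁α₂n/(c₂α₁))` and `C = α₁nRB + α₂nR`, equality holds in the Cauchy–Schwarz lower
bound, and consequently, for fixed `n`, among all positive `B', R'` with
`α₁nR'B' + α₂nR' = C`, the objective `c₁/(RB) + c₂/(nR) + c₃/n²` is minimized at
`B* = √(c₁α₂n/(c₂α₁))`. -/
theorem stmt_18 (c1 c2 c3 a1 a2 n R B C : ℝ)
    (hc1 : 0 < c1) (hc2 : 0 < c2) (hc3 : 0 < c3)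
    (ha1 : 0 < a1) (ha2 : 0 < a2) (hn : 0 < n) (hR : 0 < R)
    (hB : B = Real.sqrt (c1 * a2 * n / (c2 * a1)))
    (hC : C = a1 * n * R * B + a2 * n * R) :
    (c1 / (R * B) + c2 / (n * R) + c3 / n ^ 2) * C
        = (Real.sqrt (c1 * a1 * n) + Real.sqrt (c2 * a2)) ^ 2 + C * c3 / n ^ 2
      ∧ ∀ B' R' : ℝ, 0 < B' → 0 < R' → a1 * n * R' * B' + a2 * n * R' = C →
          c1 / (R * B) + c2 / (n * R) + c3 / n ^ 2
            ≤ c1 / (R' * B') + c2 / (n * R') + c3 / n ^ 2 := by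
  have hBpos : 0 < B := by
    rw [hB]; exact Real.sqrt_pos.mpr (by positivity)
  set s1 := Real.sqrt (c1 * a1 * n) with hs1def
  set s2 := Real.sqrt (c2 * a2) with hs2def
  have hs1 : s1 ^ 2 = c1 * a1 * n := Real.sq_sqrt (by positivity)
  have hs2 : s2 ^ 2 = c2 * a2 := Real.sq_sqrt (by positivity)
  have hs1p : 0 < s1 := Real.sqrt_pos.mpr (by positivity)
  have hs2p : 0 < s2 := Real.sqrt_pos.mpr (by positivity)
  have hB2 : B ^ 2 * (c2 * a1) = c1 * a2 * n := by
    rw [hB, Real.sq_sqrt (by positivity)]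
    field_simp
  have hss : (s1 * s2) ^ 2 = (c1 * a2 * n) * (c2 * a1) := by
    rw [mul_pow, hs1, hs2]; ring
  have key : B * (c2 * a1) = s1 * s2 := by
    have h1 : (B * (c2 * a1)) ^ 2 = (s1 * s2) ^ 2 := by
      rw [hss]; linear_combination (c2 * a1) * hB2
    have h2 : 0 ≤ B * (c2 * a1) := by positivity
    have h3 : 0 ≤ s1 * s2 := by positivity
    calc B * (c2 * a1) = Real.sqrt ((B * (c2 * a1)) ^ 2) := (Real.sqrt_sq h2).symm
      _ = Real.sqrt ((s1 * s2) ^ 2) := by rw [h1]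
      _ = s1 * s2 := Real.sqrt_sq h3
  have hCpos : 0 < C := by
    rw [hC]; positivity
  have hpart1 : (c1 / (R * B) + c2 / (n * R) + c3 / n ^ 2) * C
      = (s1 + s2) ^ 2 + C * c3 / n ^ 2 := by
    rw [hC]
    have h1 : (s1 + s2) ^ 2 = c1 * a1 * n + 2 * (B * (c2 * a1)) + c2 * a2 := by
      linear_combination hs1 + hs2 - 2 * key
    rw [h1]
    field_simp
    linear_combination (-n) * hB2
  refine ⟨hpart1, fun B' R' hB' hR' hcon => ?_⟩
  have hmain : (s1 + s2) ^ 2 ≤ (c1 / (R' * B') + c2 / (n * R')) * C := by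
    rw [← hcon]
    have hexp : (c1 / (R' * B') + c2 / (n * R')) * (a1 * n * R' * B' + a2 * n * R')
        = c1 * a1 * n + c2 * a2 + (c1 * a2 * n / B' + c2 * a1 * B') := by
      field_simp
      ring
    rw [hexp]
    have hAM : 2 * (s1 * s2) ≤ c1 * a2 * n / B' + c2 * a1 * B' := by
      rw [div_add' _ _ _ (ne_of_gt hB'), le_div_iff₀ hB']
      have h4 : (c2 * a1) * (c1 * a2 * n + c2 * a1 * B' * B' - 2 * (s1 * s2) * B')
          = (c2 * a1 * B' - s1 * s2) ^ 2 := by linear_combination -hss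
      have h6 : (c2 * a1) * 0 ≤ (c2 * a1) * (c1 * a2 * n + c2 * a1 * B' * B' - 2 * (s1 * s2) * B') := by
        rw [mul_zero, h4]; exact sq_nonneg _
      have h7 := le_of_mul_le_mul_left h6 (mul_pos hc2 ha1)
      linarith
    have hexpand : (s1 + s2) ^ 2 = s1 ^ 2 + 2 * (s1 * s2) + s2 ^ 2 := by ring
    linarith [hs1, hs2, hAM, hexpand]
  have hle : c1 / (R * B) + c2 / (n * R) ≤ c1 / (R' * B') + c2 / (n * R') := by
    have hL : (c1 / (R * B) + c2 / (n * R)) * C = (s1 + s2) ^ 2 := by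
      have h := hpart1
      have hsplit : (c1 / (R * B) + c2 / (n * R) + c3 / n ^ 2) * C
          = (c1 / (R * B) + c2 / (n * R)) * C + C * c3 / n ^ 2 := by ring
      rw [hsplit] at h
      linarith
    have h2 := hmain
    rw [← hL] at h2
    exact le_of_mul_le_mul_right h2 hCpos
  linarith
end
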